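/- Let E be a quasilinear symmetric Dirichlet form on L²(X,m), i.e. in addition dom(E) = {u : E(u) < ∞} is a linear subspace of L²(X,m). Then the lattice operations are jointly continuous on the energy space: if uₙ → u and vₙ → v in the norm ‖·‖_𝔇, then uₙ∧vₙ → u∧v and uₙ∨vₙ → u∨v in ‖·‖_𝔇. -/

import Mathlib

set_option maxHeartbeats 1000000
set_option synthInstance.maxHeartbeats 400000
set_option linter.unusedSectionVars false
set_option linter.unusedVariables false

open scoped ENNReal
open MeasureTheory

noncomputable section

variable {X : Type*} [TopologicalSpace X] [MeasurableSpace X] [BorelSpace X]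
variable {m : Measure X} [SigmaFinite m]

/-- Convexity for an `ℝ≥0∞`-valued functional on `L²(X,m)`. -/
def IsConvexFunctional (E : Lp ℝ 2 m → ℝ≥0∞) : Prop :=
  ∀ u v : Lp ℝ 2 m, ∀ a b : ℝ, 0 ≤ a → 0 ≤ b → a + b = 1 →
    E (a • u + b • v) ≤ ENNReal.ofReal a * E u + ENNReal.ofReal b * E v

/-- The real function `s ↦ ½((s+α)₊ − (s−α)₋)` appearing in the second defining
inequality of Dirichlet forms. -/
def medTrunc (α s : ℝ) : ℝ :=
  (max (s + α) 0 - max (-(s - α)) 0) / 2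

/-- Cipriani–Grillo: a (nonlinear) Dirichlet form is a convex, lower semicontinuous
functional `E : L²(X,m) → [0,∞]` with dense effective domain satisfying the two
structural inequalities. The second one is stated for any `w ∈ L²` which is an a.e.
representative of `½((u−v+α)₊ − (u−v−α)₋)`. -/
def IsDirichletForm (E : Lp ℝ 2 m → ℝ≥0∞) : Prop :=
  IsConvexFunctional E ∧ LowerSemicontinuous E ∧ Dense {u : Lp ℝ 2 m | E u < ⊤} ∧
  (∀ u v : Lp ℝ 2 m, E (u ⊓ v) + E (u ⊔ v) ≤ E u + E v) ∧
  (∀ u v w : Lp ℝ 2 m, ∀ α : ℝ, 0 < α →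
    (∀ᵐ x ∂m, w x = medTrunc α (u x - v x)) →
    E (v + w) + E (u - w) ≤ E u + E v)

/-- `E` is symmetric: `E 0 = 0` and `E (-u) = E u`. -/
def IsSymmetricFunctional (E : Lp ℝ 2 m → ℝ≥0∞) : Prop :=
  E 0 = 0 ∧ ∀ u : Lp ℝ 2 m, E (-u) = E u

/-- `E₁ u = ‖u‖₂² + E u`. -/
def EOne (E : Lp ℝ 2 m → ℝ≥0∞) (u : Lp ℝ 2 m) : ℝ≥0∞ :=
  ENNReal.ofReal (‖u‖ ^ 2) + E u

/-- The Luxemburg-type norm `‖u‖_𝔇 = inf {λ > 0 | E₁(u/λ) ≤ 1}`, with `inf ∅ = ∞`. -/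
def Dnorm (E : Lp ℝ 2 m → ℝ≥0∞) (u : Lp ℝ 2 m) : ℝ≥0∞ :=
  sInf (ENNReal.ofReal '' {l : ℝ | 0 < l ∧ EOne E (l⁻¹ • u) ≤ 1})

/-- The Dirichlet space `𝔇 = {u ∈ L² | ‖u‖_𝔇 < ∞}`. -/
def Dspace (E : Lp ℝ 2 m → ℝ≥0∞) : Set (Lp ℝ 2 m) :=
  {u : Lp ℝ 2 m | Dnorm E u < ⊤}

/-- `E` is quasilinear: its effective domain is a linear subspace of `L²(X,m)`. -/
def IsQuasilinear (E : Lp ℝ 2 m → ℝ≥0∞) : Prop :=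
  ∃ S : Submodule ℝ (Lp ℝ 2 m), {u : Lp ℝ 2 m | E u < ⊤} = (S : Set (Lp ℝ 2 m))

namespace CGaux

open Filter

/-! ### Pointwise real identities -/

lemma r_main (s t : ℝ) : (t - min t (max (-s) 0)) - min (max (-t) 0) (max s 0)
    = max (s + t) 0 - max s 0 := by
  simp only [max_def, min_def]
  split_ifs <;> linarith

lemma r_inf (a b : ℝ) : min a b = a - max (a - b) 0 := by
  simp only [max_def, min_def]
  split_ifs <;> linarith

lemma r_sup (a b : ℝ) : max a b = a + max (b - a) 0 := by
  simp only [max_def, min_def]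
  split_ifs <;> linarith

/-! ### Lp lattice identities -/

lemma smul_sup_zero {t : ℝ} (ht : 0 ≤ t) (a : Lp ℝ 2 m) : t • (a ⊔ 0) = (t • a) ⊔ 0 := by
  apply Lp.ext
  filter_upwards [Lp.coeFn_smul t (a ⊔ (0 : Lp ℝ 2 m)), Lp.coeFn_sup a (0 : Lp ℝ 2 m),
    Lp.coeFn_sup (t • a) (0 : Lp ℝ 2 m), Lp.coeFn_smul t a,
    Lp.coeFn_zero (E := ℝ) (p := 2) (μ := m)] with ω e1 e2 e3 e4 e5
  simp only [e1, Pi.smul_apply, e2, Pi.sup_apply, e3, e4, e5, Pi.zero_apply, smul_eq_mul]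
  rw [mul_max_of_nonneg _ _ ht, mul_zero]

lemma smul_inf {t : ℝ} (ht : 0 ≤ t) (a b : Lp ℝ 2 m) : t • (a ⊓ b) = (t • a) ⊓ (t • b) := by
  apply Lp.ext
  filter_upwards [Lp.coeFn_smul t (a ⊓ b), Lp.coeFn_inf a b,
    Lp.coeFn_inf (t • a) (t • b), Lp.coeFn_smul t a, Lp.coeFn_smul t b] with ω e1 e2 e3 e4 e5
  simp only [e1, Pi.smul_apply, e2, Pi.inf_apply, e3, e4, e5, smul_eq_mul]
  rcases le_total (a ω) (b ω) with h | h
  · rw [min_eq_left h, min_eq_left (by nlinarith)]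
  · rw [min_eq_right h, min_eq_right (by nlinarith)]

lemma lp_main (h d : Lp ℝ 2 m) :
    (d - d ⊓ ((-h) ⊔ 0)) - (((-d) ⊔ 0) ⊓ (h ⊔ 0)) = (h + d) ⊔ 0 - h ⊔ 0 := by
  apply Lp.ext
  filter_upwards [Lp.coeFn_sub (d - d ⊓ ((-h) ⊔ 0)) (((-d) ⊔ 0) ⊓ (h ⊔ 0)),
    Lp.coeFn_sub d (d ⊓ ((-h) ⊔ 0)), Lp.coeFn_inf d ((-h) ⊔ 0),
    Lp.coeFn_sup (-h) (0 : Lp ℝ 2 m), Lp.coeFn_neg h,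
    Lp.coeFn_inf ((-d) ⊔ 0) (h ⊔ 0), Lp.coeFn_sup (-d) (0 : Lp ℝ 2 m), Lp.coeFn_neg d,
    Lp.coeFn_sup h (0 : Lp ℝ 2 m),
    Lp.coeFn_sub ((h + d) ⊔ 0) (h ⊔ 0), Lp.coeFn_sup (h + d) (0 : Lp ℝ 2 m), Lp.coeFn_add h d,
    Lp.coeFn_zero (E := ℝ) (p := 2) (μ := m)]
    with ω e1 e2 e3 e4 e5 e6 e7 e8 e9 e10 e11 e12 e13
  simp only [e1, e2, e3, e4, e5, e6, e7, e8, e9, e10, e11, e12, e13, Pi.sub_apply, Pi.inf_apply,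
    Pi.sup_apply, Pi.neg_apply, Pi.add_apply, Pi.zero_apply]
  exact r_main (h ω) (d ω)

lemma lp_inf (a b : Lp ℝ 2 m) : a ⊓ b = a - (a - b) ⊔ 0 := by
  apply Lp.ext
  filter_upwards [Lp.coeFn_inf a b, Lp.coeFn_sub a ((a - b) ⊔ 0),
    Lp.coeFn_sup (a - b) (0 : Lp ℝ 2 m), Lp.coeFn_sub a b,
    Lp.coeFn_zero (E := ℝ) (p := 2) (μ := m)] with ω e1 e2 e3 e4 e5
  simp only [e1, e2, e3, e4, e5, Pi.inf_apply, Pi.sub_apply, Pi.sup_apply, Pi.zero_apply]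
  exact r_inf _ _

lemma lp_sup (a b : Lp ℝ 2 m) : a ⊔ b = a + (b - a) ⊔ 0 := by
  apply Lp.ext
  filter_upwards [Lp.coeFn_sup a b, Lp.coeFn_add a ((b - a) ⊔ 0),
    Lp.coeFn_sup (b - a) (0 : Lp ℝ 2 m), Lp.coeFn_sub b a,
    Lp.coeFn_zero (E := ℝ) (p := 2) (μ := m)] with ω e1 e2 e3 e4 e5
  simp only [e1, e2, e3, e4, e5, Pi.sup_apply, Pi.add_apply, Pi.sub_apply, Pi.zero_apply]
  exact r_sup _ _

/-! ### Modular convergence -/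

variable (E : Lp ℝ 2 m → ℝ≥0∞)

/-- Modular convergence to `0`. -/
def Mod0 (x : ℕ → Lp ℝ 2 m) : Prop :=
  Tendsto x atTop (nhds 0) ∧
    ∀ t : ℝ, 0 < t → Tendsto (fun n => E (t • x n)) atTop (nhds 0)

variable {E}

lemma mod0_congr {x y : ℕ → Lp ℝ 2 m} (h : ∀ n, x n = y n) (hx : Mod0 E x) : Mod0 E y := by
  have hxy : x = y := funext h
  rwa [hxy] at hx

lemma scale_le (hc : IsConvexFunctional E) (h0 : E 0 = 0) {t : ℝ} (ht0 : 0 ≤ t) (ht1 : t ≤ 1)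
    (x : Lp ℝ 2 m) : E (t • x) ≤ ENNReal.ofReal t * E x := by
  have h := hc x 0 t (1 - t) ht0 (by linarith) (by ring)
  simpa [h0] using h

lemma mod0_neg (hneg : ∀ u : Lp ℝ 2 m, E (-u) = E u) {x : ℕ → Lp ℝ 2 m} (hx : Mod0 E x) :
    Mod0 E fun n => -(x n) := by
  refine ⟨by simpa using hx.1.neg, fun t ht => ?_⟩
  have h := hx.2 t ht
  have : ∀ n, E (t • -(x n)) = E (t • x n) := fun n => by
    rw [smul_neg, hneg]
  simpa only [this] using h

lemma mod0_add (hc : IsConvexFunctional E) (h0 : E 0 = 0) {x y : ℕ → Lp ℝ 2 m}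
    (hx : Mod0 E x) (hy : Mod0 E y) : Mod0 E fun n => x n + y n := by
  refine ⟨by simpa using hx.1.add hy.1, fun t ht => ?_⟩
  have hle : ∀ n, E (t • (x n + y n)) ≤
      ENNReal.ofReal (1 / 2) * E ((2 * t) • x n) + ENNReal.ofReal (1 / 2) * E ((2 * t) • y n) := by
    intro n
    have hrw : t • (x n + y n)
        = (1 / 2 : ℝ) • ((2 * t) • x n) + (1 / 2 : ℝ) • ((2 * t) • y n) := by
      rw [smul_smul, smul_smul]
      module
    rw [hrw]
    exact hc _ _ _ _ (by norm_num) (by norm_num) (by norm_num)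
  have hx2 : Tendsto (fun n => ENNReal.ofReal (1 / 2) * E ((2 * t) • x n)) atTop (nhds 0) := by
    have := ENNReal.Tendsto.const_mul (hx.2 (2 * t) (by linarith))
      (Or.inr ENNReal.ofReal_ne_top) (a := ENNReal.ofReal (1 / 2))
    simpa using this
  have hy2 : Tendsto (fun n => ENNReal.ofReal (1 / 2) * E ((2 * t) • y n)) atTop (nhds 0) := by
    have := ENNReal.Tendsto.const_mul (hy.2 (2 * t) (by linarith))
      (Or.inr ENNReal.ofReal_ne_top) (a := ENNReal.ofReal (1 / 2))
    simpa using this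
  have hsum := hx2.add hy2
  rw [add_zero] at hsum
  exact tendsto_of_tendsto_of_tendsto_of_le_of_le tendsto_const_nhds hsum
    (fun n => zero_le) hle

lemma E_sup_zero_le (hlat : ∀ u v : Lp ℝ 2 m, E (u ⊓ v) + E (u ⊔ v) ≤ E u + E v)
    (h0 : E 0 = 0) (b : Lp ℝ 2 m) : E (b ⊔ 0) ≤ E b := by
  have h := hlat b 0
  rw [h0, add_zero] at h
  exact le_trans le_add_self h

lemma mod0_pos (hlat : ∀ u v : Lp ℝ 2 m, E (u ⊓ v) + E (u ⊔ v) ≤ E u + E v) (h0 : E 0 = 0)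
    {x : ℕ → Lp ℝ 2 m} (hx : Mod0 E x) : Mod0 E fun n => x n ⊔ 0 := by
  constructor
  · have := hx.1.sup_nhds (tendsto_const_nhds (x := (0 : Lp ℝ 2 m)))
    simpa using this
  · intro t ht
    have key : ∀ n, E (t • (x n ⊔ 0)) ≤ E (t • x n) := fun n => by
      rw [smul_sup_zero ht.le]
      exact E_sup_zero_le hlat h0 _
    exact tendsto_of_tendsto_of_tendsto_of_le_of_le tendsto_const_nhds (hx.2 t ht)
      (fun n => zero_le) key

lemma mod0_inf_const (hlsc : LowerSemicontinuous E)
    (hlat : ∀ u v : Lp ℝ 2 m, E (u ⊓ v) + E (u ⊔ v) ≤ E u + E v)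
    {g : Lp ℝ 2 m} (hg0 : (0 : Lp ℝ 2 m) ≤ g) (hgdom : ∀ t : ℝ, 0 < t → E (t • g) < ⊤)
    {x : ℕ → Lp ℝ 2 m} (hx : Mod0 E x) : Mod0 E fun n => x n ⊓ g := by
  constructor
  · have := hx.1.inf_nhds (tendsto_const_nhds (x := g))
    simpa [inf_eq_left.mpr hg0] using this
  · intro t ht
    have hrw : ∀ n, E (t • (x n ⊓ g)) = E ((t • x n) ⊓ (t • g)) := fun n => by
      rw [smul_inf ht.le]
    simp only [hrw]
    set G := t • g with hGdef
    have hG0 : (0 : Lp ℝ 2 m) ≤ G := by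
      have hg' : g ⊔ 0 = g := sup_eq_left.mpr hg0
      have hGeq : G = G ⊔ 0 := by
        rw [hGdef, ← smul_sup_zero ht.le, hg']
      rw [hGeq]
      exact le_sup_right
    have hGfin : E G < ⊤ := hgdom t ht
    have hyt : Tendsto (fun n => t • x n) atTop (nhds 0) := by
      simpa using hx.1.const_smul t
    have hyE : Tendsto (fun n => E (t • x n)) atTop (nhds 0) := hx.2 t ht
    have hsupT : Tendsto (fun n => (t • x n) ⊔ G) atTop (nhds G) := by
      have := hyt.sup_nhds (tendsto_const_nhds (x := G))
      simpa [sup_eq_right.mpr hG0] using this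
    refine ENNReal.tendsto_nhds_zero.mpr fun ε hε => ?_
    set ε₁ : ℝ≥0∞ := min (ε / 2) 1 with hε₁def
    have hε₁0 : 0 < ε₁ := lt_min (ENNReal.div_pos hε.ne' (by norm_num)) one_pos
    have hε₁top : ε₁ ≠ ⊤ := ne_top_of_le_ne_top ENNReal.one_ne_top (min_le_right _ _)
    have hε₁ε : ε₁ + ε₁ ≤ ε := by
      calc ε₁ + ε₁ ≤ ε / 2 + ε / 2 := add_le_add (min_le_left _ _) (min_le_left _ _)
        _ = ε := ENNReal.add_halves ε
    have hev1 : ∀ᶠ n in atTop, E (t • x n) ≤ ε₁ :=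
      ENNReal.tendsto_nhds_zero.mp hyE ε₁ hε₁0
    have hbound : ∀ n, E ((t • x n) ⊓ G) + E ((t • x n) ⊔ G) ≤ E (t • x n) + E G :=
      fun n => hlat _ _
    by_cases hcase : E G ≤ ε₁
    · filter_upwards [hev1] with n h1
      calc E ((t • x n) ⊓ G) ≤ E (t • x n) + E G := le_trans le_self_add (hbound n)
        _ ≤ ε₁ + ε₁ := add_le_add h1 hcase
        _ ≤ ε := hε₁ε
    · push_neg at hcase
      have hlt : E G - ε₁ < E G :=
        ENNReal.sub_lt_self hGfin.ne (hε₁0.trans hcase).ne' hε₁0.ne'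
      have hev2 : ∀ᶠ n in atTop, E G - ε₁ < E ((t • x n) ⊔ G) :=
        hsupT.eventually (hlsc G _ hlt)
      filter_upwards [hev1, hev2] with n h1 h2
      have hsum : E ((t • x n) ⊓ G) + E ((t • x n) ⊔ G) ≤ ε₁ + E G :=
        le_trans (hbound n) (add_le_add h1 le_rfl)
      have hfin2 : E ((t • x n) ⊔ G) ≠ ⊤ := by
        refine ne_top_of_le_ne_top (ENNReal.add_ne_top.mpr ⟨hε₁top, hGfin.ne⟩) ?_
        exact le_trans le_add_self hsum
      have h3 : E G ≤ E ((t • x n) ⊔ G) + ε₁ := tsub_le_iff_right.mp h2.le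
      have h4 : E ((t • x n) ⊓ G) + E ((t • x n) ⊔ G)
          ≤ (ε₁ + ε₁) + E ((t • x n) ⊔ G) := by
        calc E ((t • x n) ⊓ G) + E ((t • x n) ⊔ G) ≤ ε₁ + E G := hsum
          _ ≤ ε₁ + (E ((t • x n) ⊔ G) + ε₁) := add_le_add le_rfl h3
          _ = (ε₁ + ε₁) + E ((t • x n) ⊔ G) := by ring
      have h5 : E ((t • x n) ⊓ G) ≤ ε₁ + ε₁ :=
        (ENNReal.add_le_add_iff_right hfin2).mp h4
      exact le_trans h5 hε₁ε

lemma mod0_posShift (hc : IsConvexFunctional E) (h0 : E 0 = 0)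
    (hneg : ∀ u : Lp ℝ 2 m, E (-u) = E u) (hlsc : LowerSemicontinuous E)
    (hlat : ∀ u v : Lp ℝ 2 m, E (u ⊓ v) + E (u ⊔ v) ≤ E u + E v)
    {h : Lp ℝ 2 m} (hdom : ∀ t : ℝ, 0 < t → E (t • h) < ⊤)
    {d : ℕ → Lp ℝ 2 m} (hd : Mod0 E d) :
    Mod0 E fun n => (h + d n) ⊔ 0 - h ⊔ 0 := by
  have hdom' : ∀ w : Lp ℝ 2 m, (∀ t : ℝ, 0 < t → E (t • w) < ⊤) →
      ∀ t : ℝ, 0 < t → E (t • (w ⊔ 0)) < ⊤ := by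
    intro w hw t ht
    rw [smul_sup_zero ht.le]
    exact lt_of_le_of_lt (E_sup_zero_le hlat h0 _) (hw t ht)
  have hnegdom : ∀ t : ℝ, 0 < t → E (t • (-h)) < ⊤ := by
    intro t ht
    rw [smul_neg, hneg]
    exact hdom t ht
  have hg1dom := hdom' (-h) hnegdom
  have hg2dom := hdom' h hdom
  have hg10 : (0 : Lp ℝ 2 m) ≤ (-h) ⊔ 0 := le_sup_right
  have hg20 : (0 : Lp ℝ 2 m) ≤ h ⊔ 0 := le_sup_right
  have hinf1 : Mod0 E fun n => d n ⊓ ((-h) ⊔ 0) := mod0_inf_const hlsc hlat hg10 hg1dom hd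
  have hA : Mod0 E fun n => d n - d n ⊓ ((-h) ⊔ 0) := by
    have := mod0_add hc h0 hd (mod0_neg hneg hinf1)
    exact mod0_congr (fun n => (sub_eq_add_neg _ _).symm) this
  have hB : Mod0 E fun n => ((-(d n)) ⊔ 0) ⊓ (h ⊔ 0) :=
    mod0_inf_const hlsc hlat hg20 hg2dom (mod0_pos hlat h0 (mod0_neg hneg hd))
  have hAB := mod0_add hc h0 hA (mod0_neg hneg hB)
  refine mod0_congr (fun n => ?_) hAB
  rw [← sub_eq_add_neg]
  exact lp_main h (d n)

/-! ### Relation between `Dnorm` convergence and modular convergence -/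

lemma dnorm_tendsto (hc : IsConvexFunctional E) (h0 : E 0 = 0) {x : ℕ → Lp ℝ 2 m}
    (hx : Mod0 E x) : Tendsto (fun n => Dnorm E (x n)) atTop (nhds 0) := by
  refine ENNReal.tendsto_nhds_zero.mpr fun ε hε => ?_
  set r : ℝ≥0∞ := min ε 1 with hrdef
  have hr0 : 0 < r := lt_min hε one_pos
  have hrtop : r ≠ ⊤ := ne_top_of_le_ne_top ENNReal.one_ne_top (min_le_right _ _)
  set ρ : ℝ := r.toReal with hρdef
  have hρ0 : 0 < ρ := ENNReal.toReal_pos hr0.ne' hrtop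
  have hnorm : Tendsto (fun n => ‖x n‖) atTop (nhds 0) := by
    simpa using hx.1.norm
  have hev1 : ∀ᶠ n in atTop, ‖x n‖ < ρ / 4 :=
    hnorm.eventually_lt_const (by positivity)
  have hev2 : ∀ᶠ n in atTop, E ((ρ / 2)⁻¹ • x n) ≤ 1 / 2 :=
    ENNReal.tendsto_nhds_zero.mp (hx.2 ((ρ / 2)⁻¹) (by positivity)) (1 / 2) (by norm_num)
  filter_upwards [hev1, hev2] with n h1 h2
  have hznorm : ‖(ρ / 2)⁻¹ • x n‖ ≤ 1 / 2 := by
    rw [norm_smul, Real.norm_eq_abs, abs_of_pos (by positivity : (0 : ℝ) < (ρ / 2)⁻¹)]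
    calc (ρ / 2)⁻¹ * ‖x n‖ ≤ (ρ / 2)⁻¹ * (ρ / 4) :=
          mul_le_mul_of_nonneg_left h1.le (by positivity)
      _ = 1 / 2 := by field_simp; ring
  have hE1 : EOne E ((ρ / 2)⁻¹ • x n) ≤ 1 := by
    simp only [EOne]
    have hsq : ‖(ρ / 2)⁻¹ • x n‖ ^ 2 ≤ 1 / 2 := by
      nlinarith [norm_nonneg ((ρ / 2)⁻¹ • x n)]
    have hofr : ENNReal.ofReal (‖(ρ / 2)⁻¹ • x n‖ ^ 2) ≤ 1 / 2 := by
      refine le_trans (ENNReal.ofReal_le_ofReal hsq) ?_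
      rw [ENNReal.ofReal_div_of_pos (by norm_num)]
      simp
    calc ENNReal.ofReal (‖(ρ / 2)⁻¹ • x n‖ ^ 2) + E ((ρ / 2)⁻¹ • x n)
        ≤ 1 / 2 + 1 / 2 := add_le_add hofr h2
      _ = 1 := ENNReal.add_halves 1
  have hmem : ENNReal.ofReal (ρ / 2) ∈
      ENNReal.ofReal '' {l : ℝ | 0 < l ∧ EOne E (l⁻¹ • x n) ≤ 1} :=
    Set.mem_image_of_mem _ ⟨by positivity, hE1⟩
  calc Dnorm E (x n) ≤ ENNReal.ofReal (ρ / 2) := sInf_le hmem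
    _ ≤ ENNReal.ofReal ρ := ENNReal.ofReal_le_ofReal (by linarith)
    _ = r := ENNReal.ofReal_toReal hrtop
    _ ≤ ε := min_le_left _ _

lemma mod0_of_dnorm (hc : IsConvexFunctional E) (h0 : E 0 = 0) {x : ℕ → Lp ℝ 2 m}
    (hx : Tendsto (fun n => Dnorm E (x n)) atTop (nhds 0)) : Mod0 E x := by
  have key : ∀ δ : ℝ, 0 < δ →
      ∀ᶠ n in atTop, ∃ l : ℝ, 0 < l ∧ l < δ ∧ EOne E (l⁻¹ • x n) ≤ 1 := by
    intro δ hδ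
    have hev : ∀ᶠ n in atTop, Dnorm E (x n) < ENNReal.ofReal δ :=
      hx.eventually_lt_const (ENNReal.ofReal_pos.mpr hδ)
    filter_upwards [hev] with n hn
    rw [Dnorm, sInf_lt_iff] at hn
    obtain ⟨b, ⟨l, ⟨hl0, hE1⟩, rfl⟩, hblt⟩ := hn
    exact ⟨l, hl0, (ENNReal.ofReal_lt_ofReal_iff hδ).mp hblt, hE1⟩
  constructor
  · refine NormedAddCommGroup.tendsto_nhds_zero.mpr fun ε hε => ?_
    filter_upwards [key ε hε] with n hn
    obtain ⟨l, hl0, hlδ, hE1⟩ := hn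
    simp only [EOne] at hE1
    have h2 : ENNReal.ofReal (‖l⁻¹ • x n‖ ^ 2) ≤ 1 := le_trans le_self_add hE1
    have h3 : ‖l⁻¹ • x n‖ ^ 2 ≤ 1 := ENNReal.ofReal_le_one.mp h2
    have h4 : ‖l⁻¹ • x n‖ ≤ 1 := by nlinarith [norm_nonneg (l⁻¹ • x n)]
    rw [norm_smul, Real.norm_eq_abs, abs_of_pos (inv_pos.mpr hl0)] at h4
    have h5 : ‖x n‖ ≤ l := by
      calc ‖x n‖ = l * (l⁻¹ * ‖x n‖) := by field_simp
        _ ≤ l * 1 := mul_le_mul_of_nonneg_left h4 hl0.le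
        _ = l := mul_one l
    exact lt_of_le_of_lt h5 hlδ
  · intro t ht
    refine ENNReal.tendsto_nhds_zero.mpr fun ε hε => ?_
    set ε₁ : ℝ≥0∞ := min ε 1 with hε₁def
    have hε₁0 : 0 < ε₁ := lt_min hε one_pos
    have hε₁top : ε₁ ≠ ⊤ := ne_top_of_le_ne_top ENNReal.one_ne_top (min_le_right _ _)
    set δ : ℝ := ε₁.toReal / t with hδdef
    have hδ0 : 0 < δ := div_pos (ENNReal.toReal_pos hε₁0.ne' hε₁top) ht
    filter_upwards [key δ hδ0] with n hn
    obtain ⟨l, hl0, hlδ, hE1⟩ := hn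
    simp only [EOne] at hE1
    have hEz : E (l⁻¹ • x n) ≤ 1 := le_trans le_add_self hE1
    have hrw : t • x n = (t * l) • (l⁻¹ • x n) := by
      rw [smul_smul, mul_assoc, mul_inv_cancel₀ hl0.ne', mul_one]
    have h6 : t * l ≤ ε₁.toReal := by
      calc t * l ≤ t * δ := mul_le_mul_of_nonneg_left hlδ.le ht.le
        _ = ε₁.toReal := by rw [hδdef]; field_simp
    have h7 : t * l ≤ 1 := by
      refine le_trans h6 ?_
      have := ENNReal.toReal_mono ENNReal.one_ne_top (min_le_right ε 1)
      simpa using this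
    calc E (t • x n) = E ((t * l) • (l⁻¹ • x n)) := by rw [hrw]
      _ ≤ ENNReal.ofReal (t * l) * E (l⁻¹ • x n) :=
          scale_le hc h0 (by positivity) h7 _
      _ ≤ ENNReal.ofReal (t * l) * 1 := mul_le_mul_right hEz _
      _ = ENNReal.ofReal (t * l) := mul_one _
      _ ≤ ENNReal.ofReal ε₁.toReal := ENNReal.ofReal_le_ofReal h6
      _ = ε₁ := ENNReal.ofReal_toReal hε₁top
      _ ≤ ε := min_le_left _ _

end CGaux

open CGaux Filter

/-- For a quasilinear symmetric Dirichlet form, the lattice operations are jointly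
continuous on the energy space `𝔇` (with respect to the norm `‖·‖_𝔇`). -/
theorem lattice_operations_continuous
    (hsupp : ∀ U : Set X, IsOpen U → U.Nonempty → 0 < m U)
    (E : Lp ℝ 2 m → ℝ≥0∞) (hE : IsDirichletForm E) (hsym : IsSymmetricFunctional E)
    (hql : IsQuasilinear E)
    (u v : ℕ → Lp ℝ 2 m) (u₀ v₀ : Lp ℝ 2 m)
    (hu : ∀ n, u n ∈ Dspace E) (hv : ∀ n, v n ∈ Dspace E)
    (hu₀ : u₀ ∈ Dspace E) (hv₀ : v₀ ∈ Dspace E)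
    (hu_conv : Filter.Tendsto (fun n => Dnorm E (u n - u₀)) Filter.atTop (nhds 0))
    (hv_conv : Filter.Tendsto (fun n => Dnorm E (v n - v₀)) Filter.atTop (nhds 0)) :
    Filter.Tendsto (fun n => Dnorm E ((u n ⊓ v n) - (u₀ ⊓ v₀))) Filter.atTop (nhds 0) ∧
    Filter.Tendsto (fun n => Dnorm E ((u n ⊔ v n) - (u₀ ⊔ v₀))) Filter.atTop (nhds 0) := by
  obtain ⟨hc, hlsc, -, hlat, -⟩ := hE
  obtain ⟨h0, hneg⟩ := hsym
  obtain ⟨S, hS⟩ := hql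
  have memS : ∀ w : Lp ℝ 2 m, w ∈ Dspace E → w ∈ S := by
    intro w hw
    have hne : {l : ℝ | 0 < l ∧ EOne E (l⁻¹ • w) ≤ 1}.Nonempty := by
      by_contra hcon
      rw [Set.not_nonempty_iff_eq_empty] at hcon
      have hDn : Dnorm E w = ⊤ := by
        rw [Dnorm, hcon]
        simp
      rw [Dspace, Set.mem_setOf_eq, hDn] at hw
      exact absurd hw (lt_irrefl _)
    obtain ⟨l, hl0, hE1⟩ := hne
    simp only [EOne] at hE1
    have hfin : E (l⁻¹ • w) < ⊤ :=
      lt_of_le_of_lt (le_trans le_add_self hE1) ENNReal.one_lt_top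
    have hmem : l⁻¹ • w ∈ S := by
      have : l⁻¹ • w ∈ {u : Lp ℝ 2 m | E u < ⊤} := hfin
      rwa [hS] at this
    have : w = l • (l⁻¹ • w) := by
      rw [smul_smul, mul_inv_cancel₀ hl0.ne', one_smul]
    rw [this]
    exact S.smul_mem l hmem
  have EfinS : ∀ w : Lp ℝ 2 m, w ∈ S → E w < ⊤ := by
    intro w hw
    have : w ∈ {u : Lp ℝ 2 m | E u < ⊤} := by
      rw [hS]
      exact hw
    exact this
  have hu₀S : u₀ ∈ S := memS u₀ hu₀
  have hv₀S : v₀ ∈ S := memS v₀ hv₀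
  have hdom1 : ∀ t : ℝ, 0 < t → E (t • (u₀ - v₀)) < ⊤ := fun t _ =>
    EfinS _ (S.smul_mem t (S.sub_mem hu₀S hv₀S))
  have hdom2 : ∀ t : ℝ, 0 < t → E (t • (v₀ - u₀)) < ⊤ := fun t _ =>
    EfinS _ (S.smul_mem t (S.sub_mem hv₀S hu₀S))
  have hu' : Mod0 E fun n => u n - u₀ := mod0_of_dnorm hc h0 hu_conv
  have hv' : Mod0 E fun n => v n - v₀ := mod0_of_dnorm hc h0 hv_conv
  have hd : Mod0 E fun n => (u n - v n) - (u₀ - v₀) := by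
    have := mod0_add hc h0 hu' (mod0_neg hneg hv')
    exact mod0_congr (fun n => by abel) this
  have hd2 : Mod0 E fun n => (v n - u n) - (v₀ - u₀) := by
    have := mod0_neg hneg hd
    exact mod0_congr (fun n => by abel) this
  have hpos1 : Mod0 E fun n => (u n - v n) ⊔ 0 - (u₀ - v₀) ⊔ 0 := by
    have := mod0_posShift hc h0 hneg hlsc hlat hdom1 hd
    refine mod0_congr (fun n => ?_) this
    rw [show (u₀ - v₀) + ((u n - v n) - (u₀ - v₀)) = u n - v n from by abel]
  have hpos2 : Mod0 E fun n => (v n - u n) ⊔ 0 - (v₀ - u₀) ⊔ 0 := by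
    have := mod0_posShift hc h0 hneg hlsc hlat hdom2 hd2
    refine mod0_congr (fun n => ?_) this
    rw [show (v₀ - u₀) + ((v n - u n) - (v₀ - u₀)) = v n - u n from by abel]
  constructor
  · refine dnorm_tendsto hc h0 ?_
    have := mod0_add hc h0 hu' (mod0_neg hneg hpos1)
    refine mod0_congr (fun n => ?_) this
    rw [lp_inf (u n) (v n), lp_inf u₀ v₀]
    abel
  · refine dnorm_tendsto hc h0 ?_
    have := mod0_add hc h0 hu' hpos2
    refine mod0_congr (fun n => ?_) this
    rw [lp_sup (u n) (v n), lp_sup u₀ v₀]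
    abel

end
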